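/- The line ℓ = {(x,y) : x + y + 1 = 0} is invariant under the Newton map N_f of f(x,y) = (y − x², x − y²), and the restriction of N_f to ℓ (parametrized by x ↦ (x, −1−x)) is the one-dimensional Newton map of p(x) = x² + x + 1. -/

import Mathlib

/-- Newton map on the plane. -/
noncomputable def newton2 (f : ℝ × ℝ → ℝ × ℝ) (x : ℝ × ℝ) : ℝ × ℝ :=
  x - (fderiv ℝ f x).inverse (f x)
/-- One-dimensional Newton map. -/
noncomputable def newton1 (q : ℝ → ℝ) (x : ℝ) : ℝ :=
  x - q x / deriv q x

noncomputable def Jmap (a b c d : ℝ) : (ℝ × ℝ) →L[ℝ] (ℝ × ℝ) :=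
  LinearMap.toContinuousLinearMap
    { toFun := fun v => (a * v.1 + b * v.2, c * v.1 + d * v.2)
      map_add' := by intro u v; simp [Prod.ext_iff]; constructor <;> ring
      map_smul' := by intro r v; simp [Prod.ext_iff, smul_eq_mul]; constructor <;> ring }

lemma Jmap_apply (a b c d : ℝ) (v : ℝ × ℝ) :
    Jmap a b c d v = (a * v.1 + b * v.2, c * v.1 + d * v.2) := rfl

noncomputable def Jequiv (p q : ℝ) (h : 4 * p * q - 1 ≠ 0) : (ℝ × ℝ) ≃L[ℝ] (ℝ × ℝ) :=
  ContinuousLinearEquiv.equivOfInverse (Jmap (-2*p) 1 1 (-2*q))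
    (Jmap (-2*q/(4*p*q-1)) (-1/(4*p*q-1)) (-1/(4*p*q-1)) (-2*p/(4*p*q-1)))
    (fun v => by
      rw [Prod.ext_iff]
      simp only [Jmap_apply, div_eq_mul_inv]
      constructor
      · linear_combination v.1 * mul_inv_cancel₀ h
      · linear_combination v.2 * mul_inv_cancel₀ h)
    (fun v => by
      rw [Prod.ext_iff]
      simp only [Jmap_apply, div_eq_mul_inv]
      constructor
      · linear_combination v.1 * mul_inv_cancel₀ h
      · linear_combination v.2 * mul_inv_cancel₀ h)

/-- The ghost line `{x + y + 1 = 0}` is invariant under the Newton map of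
`f(x,y) = (y − x², x − y²)`, and on it (parametrized by `x ↦ (x, −1−x)`) the Newton map
restricts to the one-dimensional Newton map of `p(x) = x² + x + 1`. -/
theorem stmt_11 (f : ℝ × ℝ → ℝ × ℝ)
    (hf : ∀ z : ℝ × ℝ, f z = (z.2 - z.1 ^ 2, z.1 - z.2 ^ 2))
    (p : ℝ → ℝ) (hp : ∀ x, p x = x ^ 2 + x + 1)
    (x : ℝ) (hx : 4 * x * (-1 - x) ≠ 1) :
    newton2 f (x, -1 - x) = (newton1 p x, -1 - newton1 p x) := by
  have hfe : f = fun z : ℝ × ℝ => (z.2 - z.1 ^ 2, z.1 - z.2 ^ 2) := funext hf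
  have hpe : p = fun t => t ^ 2 + t + 1 := funext hp
  set y : ℝ := -1 - x with hy
  have hd : 4 * x * y - 1 ≠ 0 := fun h => hx (by linarith)
  have h1 : (2 * x + 1) ≠ 0 := by
    intro h
    apply hd
    have : y = -1 - x := hy
    nlinarith [sq_nonneg (2*x+1)]
  -- the derivative
  have hder : HasFDerivAt f ((Jequiv x y hd : (ℝ × ℝ) ≃L[ℝ] ℝ × ℝ) :
      (ℝ × ℝ) →L[ℝ] ℝ × ℝ) (x, y) := by
    rw [hfe]
    have hA : HasFDerivAt (fun z : ℝ × ℝ => z.2 - z.1 ^ 2)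
        ((ContinuousLinearMap.snd ℝ ℝ ℝ) -
          (x • (ContinuousLinearMap.fst ℝ ℝ ℝ) + x • (ContinuousLinearMap.fst ℝ ℝ ℝ))) (x, y) := by
      have := hasFDerivAt_snd.sub
        ((hasFDerivAt_fst (𝕜 := ℝ) (p := ((x, y) : ℝ × ℝ))).mul hasFDerivAt_fst)
      exact this.congr_of_eventuallyEq (Filter.Eventually.of_forall fun z => by simp [pow_two])
    have hB : HasFDerivAt (fun z : ℝ × ℝ => z.1 - z.2 ^ 2)
        ((ContinuousLinearMap.fst ℝ ℝ ℝ) -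
          (y • (ContinuousLinearMap.snd ℝ ℝ ℝ) + y • (ContinuousLinearMap.snd ℝ ℝ ℝ))) (x, y) := by
      have := hasFDerivAt_fst.sub
        ((hasFDerivAt_snd (𝕜 := ℝ) (p := ((x, y) : ℝ × ℝ))).mul hasFDerivAt_snd)
      exact this.congr_of_eventuallyEq (Filter.Eventually.of_forall fun z => by simp [pow_two])
    have := hA.prodMk hB
    refine this.congr_fderiv (Eq.symm ?_)
    apply ContinuousLinearMap.ext
    intro v
    show Jmap (-2*x) 1 1 (-2*y) v = _
    simp [Jmap_apply, ContinuousLinearMap.prod_apply, smul_eq_mul, Prod.ext_iff]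
    try constructor <;> ring
  have hfd : fderiv ℝ f (x, y) = ((Jequiv x y hd : (ℝ × ℝ) ≃L[ℝ] ℝ × ℝ) :
      (ℝ × ℝ) →L[ℝ] ℝ × ℝ) := hder.fderiv
  have hinv : (fderiv ℝ f (x, y)).inverse =
      ((Jequiv x y hd).symm : (ℝ × ℝ) →L[ℝ] ℝ × ℝ) := by
    rw [hfd]
    exact ContinuousLinearMap.inverse_equiv _
  have hderivp : deriv p x = 2 * x + 1 := by
    rw [hpe]
    simp [deriv_add, deriv_pow]
    try ring
  have hfx : f (x, y) = (-(x^2 + x + 1), -(x^2 + x + 1)) := by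
    rw [hf]
    simp [hy]
    constructor <;> ring
  rw [newton2, hinv, hfx]
  have hsymm : ((Jequiv x y hd).symm : (ℝ × ℝ) →L[ℝ] ℝ × ℝ) (-(x^2 + x + 1), -(x^2 + x + 1))
      = (Jmap (-2*y/(4*x*y-1)) (-1/(4*x*y-1)) (-1/(4*x*y-1)) (-2*x/(4*x*y-1)))
          (-(x^2 + x + 1), -(x^2 + x + 1)) := rfl
  rw [hsymm, Jmap_apply]
  rw [newton1, hderivp, hp]
  rw [Prod.ext_iff]
  simp only [Prod.fst_sub, Prod.snd_sub]
  have hy2 : y = -1 - x := hy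
  have hd2 : 4 * x * (-1 - x) - 1 ≠ 0 := by rw [← hy]; exact hd
  constructor
  · rw [hy2] at *
    linear_combination (-(x^2+x+1)*(2*x+1)⁻¹) * mul_inv_cancel₀ hd2 + (-(2*x+1)*(x^2+x+1)*(4 * x * (-1 - x) - 1)⁻¹) * mul_inv_cancel₀ h1
  · show y - _ = -1 - _
    rw [hy2]
    linear_combination ((x^2+x+1)*(2*x+1)⁻¹) * mul_inv_cancel₀ hd2 + ((2*x+1)*(x^2+x+1)*(4 * x * (-1 - x) - 1)⁻¹) * mul_inv_cancel₀ h1
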